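/- Let a, b ∈ ℕ with b even, and let λ be a partition satisfying λ_{a+1} = 0 and λ_i + λ_{a+1−i} ≥ b for all 1 ≤ i ≤ a. Define μ by μ_i = min(b, λ_i) for 1 ≤ i ≤ ⌊a/2⌋, μ_{a+1−i} = b − μ_i for 1 ≤ i ≤ ⌊a/2⌋, and μ_{(a+1)/2} = b/2 if a is odd. Then μ is a partition, μ ⊆ λ, and μ is (a × b)-self-dual. -/
import Mathlib


/-- A partition `λ = (λ₁ ≥ λ₂ ≥ ⋯)`, encoded by `p : ℕ → ℕ` with `p i = λ_{i+1}`. -/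
structure Partn where
  p : ℕ → ℕ
  antitone : ∀ i j, i ≤ j → p j ≤ p i
  fin_supp : ∃ N, ∀ i, N ≤ i → p i = 0

/-- `λ_i` for `i ≥ 1`. -/
def Partn.part (lam : Partn) (i : ℕ) : ℕ := lam.p (i - 1)

/-- Let `b` be even and `λ` a partition with `λ_{a+1} = 0` and `λ_i + λ_{a+1-i} ≥ b` for
`1 ≤ i ≤ a`.  Define `μ` by `μ_i = min b λ_i` for `1 ≤ i ≤ ⌊a/2⌋`,
`μ_{a+1-i} = b - μ_i` for `1 ≤ i ≤ ⌊a/2⌋`, `μ_{(a+1)/2} = b/2` if `a` is odd, and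
`μ_j = 0` for `j > a`.  Then `μ` is a partition (weakly decreasing), `μ ⊆ λ`, and `μ`
is `(a × b)`-self-dual. -/
theorem truncation_selfdual (a b : ℕ) (hb : Even b) (lam : Partn)
    (h0 : lam.part (a + 1) = 0)
    (hge : ∀ i, 1 ≤ i → i ≤ a → b ≤ lam.part i + lam.part (a + 1 - i))
    (mu : ℕ → ℕ)
    (h1 : ∀ i, 1 ≤ i → i ≤ a / 2 → mu i = min b (lam.part i))
    (h2 : ∀ i, 1 ≤ i → i ≤ a / 2 → mu (a + 1 - i) = b - mu i)
    (h3 : Odd a → mu ((a + 1) / 2) = b / 2)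
    (h4 : ∀ j, a < j → mu j = 0) :
    (∀ i, 1 ≤ i → mu (i + 1) ≤ mu i) ∧
    (∀ i, 1 ≤ i → mu i ≤ lam.part i) ∧
    (∀ i, 1 ≤ i → i ≤ a → mu i + mu (a + 1 - i) = b) ∧
    mu (a + 1) = 0 := by
  obtain ⟨c, hc⟩ := hb
  have hpart : ∀ i j : ℕ, i ≤ j → lam.part j ≤ lam.part i := by
    intro i j hij; exact lam.antitone _ _ (by omega)
  have hA : ∀ i, 1 ≤ i → i ≤ a / 2 → b / 2 ≤ mu i ∧ mu i ≤ b := by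
    intro i hi1 hi2
    rw [h1 i hi1 hi2]
    have hla := hge i hi1 (by omega)
    have hm := hpart i (a + 1 - i) (by omega)
    omega
  have hmono1 : ∀ i j, 1 ≤ i → i ≤ j → j ≤ a / 2 → mu j ≤ mu i := by
    intro i j hi hij hj
    rw [h1 i hi (by omega), h1 j (by omega) hj]
    have := hpart i j hij
    omega
  refine ⟨?_, ?_, ?_, h4 (a+1) (by omega)⟩
  · -- weakly decreasing
    intro i hi
    rcases Nat.lt_or_ge a i with h | h
    · rw [h4 (i+1) (by omega), h4 i h]
    rcases eq_or_lt_of_le h with rfl | hlt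
    · rw [h4 (i+1) (by omega)]; exact Nat.zero_le _
    by_cases hc1 : i + 1 ≤ a / 2
    · exact hmono1 i (i+1) hi (by omega) hc1
    by_cases hc2 : i ≤ a / 2
    · rcases Nat.even_or_odd a with he | ho
      · obtain ⟨k, hk⟩ := he
        have h2i := h2 i hi hc2
        rw [show a + 1 - i = i + 1 by omega] at h2i
        rw [h2i]
        have := hA i hi hc2
        omega
      · obtain ⟨k, hk⟩ := ho
        rw [show i + 1 = (a+1)/2 by omega, h3 ⟨k, hk⟩]
        have := hA i hi hc2
        omega
    · by_cases hmid : a + 1 = 2 * i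
      · have hj1 : (1:ℕ) ≤ i - 1 := by omega
        have h2j := h2 (i-1) hj1 (by omega)
        rw [show a + 1 - (i - 1) = i + 1 by omega] at h2j
        have h3' : mu i = b / 2 := by
          rw [show i = (a+1)/2 by omega]; exact h3 ⟨i-1, by omega⟩
        rw [h2j, h3']
        have := hA (i-1) hj1 (by omega)
        omega
      · have hj1 : (1:ℕ) ≤ a - i := by omega
        have hjk : a - i + 1 ≤ a / 2 := by omega
        have e1 := h2 (a-i) hj1 (by omega)
        have e2 := h2 (a-i+1) (by omega) hjk
        rw [show a + 1 - (a - i) = i + 1 by omega] at e1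
        rw [show a + 1 - (a - i + 1) = i by omega] at e2
        rw [e1, e2]
        have := hmono1 (a-i) (a-i+1) hj1 (by omega) hjk
        have := hA (a-i) hj1 (by omega)
        omega
  · -- contained in lambda
    intro i hi
    by_cases hc1 : i ≤ a / 2
    · rw [h1 i hi hc1]; exact min_le_right _ _
    by_cases hc2 : a < i
    · rw [h4 i hc2]; exact Nat.zero_le _
    by_cases hmid : a + 1 = 2 * i
    · have h3' : mu i = b / 2 := by
        rw [show i = (a+1)/2 by omega]; exact h3 ⟨i-1, by omega⟩
      have hg := hge i hi (by omega)
      rw [show a + 1 - i = i by omega] at hg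
      omega
    · have hj1 : (1:ℕ) ≤ a + 1 - i := by omega
      have hjk : a + 1 - i ≤ a / 2 := by omega
      have e := h2 (a+1-i) hj1 hjk
      rw [show a + 1 - (a + 1 - i) = i by omega] at e
      rw [e, h1 (a+1-i) hj1 hjk]
      have hg := hge (a+1-i) hj1 (by omega)
      rw [show a + 1 - (a + 1 - i) = i by omega] at hg
      omega
  · -- self-dual
    intro i hi hia
    by_cases hc1 : i ≤ a / 2
    · rw [h2 i hi hc1]
      have := hA i hi hc1
      omega
    by_cases hmid : a + 1 = 2 * i
    · have h3' : mu i = b / 2 := by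
        rw [show i = (a+1)/2 by omega]; exact h3 ⟨i-1, by omega⟩
      rw [show a + 1 - i = i by omega, h3']
      omega
    · have hj1 : (1:ℕ) ≤ a + 1 - i := by omega
      have hjk : a + 1 - i ≤ a / 2 := by omega
      have e := h2 (a+1-i) hj1 hjk
      rw [show a + 1 - (a + 1 - i) = i by omega] at e
      rw [e]
      have := hA (a+1-i) hj1 hjk
      omega
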